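/- Let ρ ∈ (0,1), let π be a bounded probability density on [0,1], and let a : [0,1]² → ℝ be any function. If g₀ and g₁ are both bounded measurable functions on [0,1]² satisfying, for all x, y ∈ [0,1], the circular integral equation g(x,y) = ρ·π(y)·∫*_{u=x}^{y} [g(x,u) + g(y,u)] du + a(x,y), then g₀(x,y) = g₁(x,y) for all x, y ∈ [0,1]. -/

import Mathlib

open MeasureTheory

/-- Circular integral: `∫*_{u=a}^{b} h(u) du` on the circle `[0,1)`.
It equals `∫_a^b h` if `a ≤ b` and `∫_a^1 h + ∫_0^b h` if `a > b`. -/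
noncomputable def cint (a b : ℝ) (h : ℝ → ℝ) : ℝ :=
  if a ≤ b then ∫ u in a..b, h u
  else (∫ u in a..(1 : ℝ), h u) + ∫ u in (0 : ℝ)..b, h u

lemma aux_intInt {f : ℝ → ℝ} (hfm : Measurable f) {M : ℝ}
    (hfb : ∀ u ∈ Set.Icc (0:ℝ) 1, |f u| ≤ M) {x y : ℝ}
    (hx : x ∈ Set.Icc (0:ℝ) 1) (hy : y ∈ Set.Icc (0:ℝ) 1) :
    IntervalIntegrable f MeasureTheory.volume x y := by
  rw [intervalIntegrable_iff]
  have hconst : IntegrableOn (fun _ : ℝ => M) (Set.uIoc x y) MeasureTheory.volume := by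
    refine (MeasureTheory.integrableOn_const_iff).2 (Or.inr ?_)
    rw [Set.uIoc]; exact measure_Ioc_lt_top
  refine hconst.mono' hfm.aestronglyMeasurable.restrict ?_
  refine (ae_restrict_iff' measurableSet_uIoc).2 (Filter.Eventually.of_forall fun u hu => ?_)
  exact hfb u (Set.uIcc_subset_Icc hx hy (Set.uIoc_subset_uIcc hu))

lemma cint_abs_le {x y : ℝ} (hx : x ∈ Set.Icc (0:ℝ) 1) (hy : y ∈ Set.Icc (0:ℝ) 1)
    {h B : ℝ → ℝ}
    (hh : ∀ a ∈ Set.Icc (0:ℝ) 1, ∀ b ∈ Set.Icc (0:ℝ) 1,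
      IntervalIntegrable h MeasureTheory.volume a b)
    (hB : ∀ a ∈ Set.Icc (0:ℝ) 1, ∀ b ∈ Set.Icc (0:ℝ) 1,
      IntervalIntegrable B MeasureTheory.volume a b)
    (hbd : ∀ u ∈ Set.Icc (0:ℝ) 1, |h u| ≤ B u) :
    |cint x y h| ≤ cint x y B := by
  have h0I : (0:ℝ) ∈ Set.Icc (0:ℝ) 1 := Set.left_mem_Icc.2 zero_le_one
  have h1I : (1:ℝ) ∈ Set.Icc (0:ℝ) 1 := Set.right_mem_Icc.2 zero_le_one
  have key : ∀ a ∈ Set.Icc (0:ℝ) 1, ∀ b ∈ Set.Icc (0:ℝ) 1, a ≤ b →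
      |∫ u in a..b, h u| ≤ ∫ u in a..b, B u := by
    intro a ha b hb hab
    refine (intervalIntegral.abs_integral_le_integral_abs hab).trans ?_
    refine intervalIntegral.integral_mono_on hab (hh a ha b hb).abs (hB a ha b hb) ?_
    intro u hu; exact hbd u ⟨ha.1.trans hu.1, hu.2.trans hb.2⟩
  rw [cint, cint]
  split
  · exact key x hx y hy ‹_›
  · exact (abs_add_le _ _).trans (add_le_add (key x hx 1 h1I hx.2) (key 0 h0I y hy hy.1))

lemma cint_const_mul (x y c : ℝ) (h : ℝ → ℝ) :
    cint x y (fun u => c * h u) = c * cint x y h := by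
  rw [cint, cint]; split
  · exact intervalIntegral.integral_const_mul c h
  · rw [intervalIntegral.integral_const_mul, intervalIntegral.integral_const_mul, mul_add]

lemma cint_sub {x y : ℝ} (hx : x ∈ Set.Icc (0:ℝ) 1) (hy : y ∈ Set.Icc (0:ℝ) 1)
    {h₁ h₂ : ℝ → ℝ}
    (hh₁ : ∀ a ∈ Set.Icc (0:ℝ) 1, ∀ b ∈ Set.Icc (0:ℝ) 1,
      IntervalIntegrable h₁ MeasureTheory.volume a b)
    (hh₂ : ∀ a ∈ Set.Icc (0:ℝ) 1, ∀ b ∈ Set.Icc (0:ℝ) 1,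
      IntervalIntegrable h₂ MeasureTheory.volume a b) :
    cint x y (fun u => h₁ u - h₂ u) = cint x y h₁ - cint x y h₂ := by
  have h0I : (0:ℝ) ∈ Set.Icc (0:ℝ) 1 := Set.left_mem_Icc.2 zero_le_one
  have h1I : (1:ℝ) ∈ Set.Icc (0:ℝ) 1 := Set.right_mem_Icc.2 zero_le_one
  rw [cint, cint, cint]; split
  · exact intervalIntegral.integral_sub (hh₁ x hx y hy) (hh₂ x hx y hy)
  · rw [intervalIntegral.integral_sub (hh₁ x hx 1 h1I) (hh₂ x hx 1 h1I),
      intervalIntegral.integral_sub (hh₁ 0 h0I y hy) (hh₂ 0 h0I y hy)]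
    ring

lemma aux_fubini {f : ℝ → ℝ} (hfm : Measurable f) {M : ℝ}
    (hfb : ∀ u ∈ Set.Icc (0:ℝ) 1, |f u| ≤ M) {x y : ℝ}
    (hx : (0:ℝ) ≤ x) (hxy : x ≤ y) (hy : y ≤ (1:ℝ)) :
    (∫ u in x..y, f u * ∫ v in x..u, f v) = (∫ v in x..y, f v)^2 / 2 := by
  have hxI : x ∈ Set.Icc (0:ℝ) 1 := ⟨hx, hxy.trans hy⟩
  have hyI : y ∈ Set.Icc (0:ℝ) 1 := ⟨hx.trans hxy, hy⟩
  have hsub : Set.Ioc x y ⊆ Set.Icc (0:ℝ) 1 := fun u hu => ⟨hx.trans hu.1.le, hu.2.trans hy⟩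
  set μ : Measure ℝ := MeasureTheory.volume.restrict (Set.Ioc x y) with hμ
  -- the two-variable function
  set K : ℝ → ℝ → ℝ := fun u v => if v ≤ u then f u * f v else 0 with hK
  have hKmeas : Measurable (Function.uncurry K) := by
    apply Measurable.ite
    · exact measurableSet_le measurable_snd measurable_fst
    · exact (hfm.comp measurable_fst).mul (hfm.comp measurable_snd)
    · exact measurable_const
  have hKint : Integrable (Function.uncurry K) (μ.prod μ) := by
    rw [hμ, Measure.prod_restrict]
    have hconst : IntegrableOn (fun _ : ℝ × ℝ => |M| * |M|) (Set.Ioc x y ×ˢ Set.Ioc x y)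
        (MeasureTheory.volume.prod MeasureTheory.volume) := by
      refine (MeasureTheory.integrableOn_const_iff).2 (Or.inr ?_)
      rw [Measure.prod_prod]
      exact ENNReal.mul_lt_top measure_Ioc_lt_top measure_Ioc_lt_top
    refine hconst.mono' hKmeas.aestronglyMeasurable.restrict ?_
    refine (ae_restrict_iff' (measurableSet_Ioc.prod measurableSet_Ioc)).2
      (Filter.Eventually.of_forall fun p hp => ?_)
    have h1 := hfb p.1 (hsub hp.1)
    have h2 := hfb p.2 (hsub hp.2)
    simp only [Function.uncurry, hK]
    split
    · rw [Real.norm_eq_abs, abs_mul]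
      exact mul_le_mul (h1.trans (le_abs_self M)) (h2.trans (le_abs_self M)) (abs_nonneg _)
        (abs_nonneg _)
    · simpa using mul_nonneg (abs_nonneg M) (abs_nonneg M)
  -- inner integral identities
  have hinner1 : ∀ u ∈ Set.Ioc x y, (∫ v, K u v ∂μ) = f u * ∫ v in x..u, f v := by
    intro u hu
    have : (fun v => K u v) = Set.indicator (Set.Iic u) (fun v => f u * f v) := by
      ext v; simp [hK, Set.indicator_apply, Set.mem_Iic]
    rw [hμ, this, integral_indicator measurableSet_Iic,
      Measure.restrict_restrict measurableSet_Iic]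
    have hset : Set.Iic u ∩ Set.Ioc x y = Set.Ioc x u := by
      ext v; constructor
      · rintro ⟨h1, h2, h3⟩; exact ⟨h2, h1⟩
      · rintro ⟨h1, h2⟩; exact ⟨h2, h1, h2.trans hu.2⟩
    rw [hset, intervalIntegral.integral_of_le hu.1.le, MeasureTheory.integral_const_mul]
  have hinner2 : ∀ v ∈ Set.Ioc x y, (∫ u, K u v ∂μ) = f v * ∫ u in v..y, f u := by
    intro v hv
    have : (fun u => K u v) = Set.indicator (Set.Ici v) (fun u => f v * f u) := by
      ext u; simp only [hK, Set.indicator_apply, Set.mem_Ici]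
      split <;> [rw [mul_comm]; rfl]
    rw [hμ, this, integral_indicator measurableSet_Ici,
      Measure.restrict_restrict measurableSet_Ici]
    have hset : Set.Ici v ∩ Set.Ioc x y = Set.Icc v y := by
      ext u; constructor
      · rintro ⟨h1, h2, h3⟩; exact ⟨h1, h3⟩
      · rintro ⟨h1, h2⟩; exact ⟨h1, hv.1.trans_le h1, h2⟩
    rw [hset, MeasureTheory.integral_Icc_eq_integral_Ioc,
      intervalIntegral.integral_of_le hv.2, MeasureTheory.integral_const_mul]
  -- Fubini
  have hswap := MeasureTheory.integral_integral_swap (f := K) hKint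
  have hL : (∫ u, ∫ v, K u v ∂μ ∂μ) = ∫ u in x..y, f u * ∫ v in x..u, f v := by
    rw [intervalIntegral.integral_of_le hxy]
    exact MeasureTheory.setIntegral_congr_fun measurableSet_Ioc hinner1
  have hR : (∫ v, ∫ u, K u v ∂μ ∂μ) = ∫ v in x..y, f v * ∫ u in v..y, f u := by
    rw [intervalIntegral.integral_of_le hxy]
    exact MeasureTheory.setIntegral_congr_fun measurableSet_Ioc hinner2
  -- combine: A = T, B = T, A + B = I^2
  have hint : ∀ a b : ℝ, a ∈ Set.Icc (0:ℝ) 1 → b ∈ Set.Icc (0:ℝ) 1 →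
      IntervalIntegrable f MeasureTheory.volume a b := fun a b ha hb => aux_intInt hfm hfb ha hb
  have hsplit : ∀ u ∈ Set.Icc x y,
      (∫ v in x..u, f v) + (∫ v in u..y, f v) = ∫ v in x..y, f v := by
    intro u hu
    exact intervalIntegral.integral_add_adjacent_intervals
      (hint x u hxI ⟨hx.trans hu.1, hu.2.trans hy⟩)
      (hint u y ⟨hx.trans hu.1, hu.2.trans hy⟩ hyI)
  -- continuity of primitives for integrability
  have hfint01 : IntegrableOn f (Set.Icc (0:ℝ) 1) MeasureTheory.volume := by
    have := (aux_intInt hfm hfb (Set.left_mem_Icc.2 zero_le_one) (Set.right_mem_Icc.2 zero_le_one))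
    rw [intervalIntegrable_iff_integrableOn_Icc_of_le zero_le_one] at this
    exact this
  have hprim : ContinuousOn (fun u => ∫ v in x..u, f v) (Set.uIcc x y) :=
    intervalIntegral.continuousOn_primitive_interval
      (hfint01.mono_set (Set.uIcc_subset_Icc hxI hyI))
  have hintA : IntervalIntegrable (fun u => f u * ∫ v in x..u, f v) MeasureTheory.volume x y :=
    (hint x y hxI hyI).mul_continuousOn hprim
  have hintB : IntervalIntegrable (fun u => f u * ∫ v in u..y, f v) MeasureTheory.volume x y := by
    have hprim2 : ContinuousOn (fun u => ∫ v in u..y, f v) (Set.uIcc x y) :=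
      intervalIntegral.continuousOn_primitive_interval_left
        (hfint01.mono_set (Set.uIcc_subset_Icc hxI hyI))
    exact (hint x y hxI hyI).mul_continuousOn hprim2
  have hAB : (∫ u in x..y, f u * ∫ v in x..u, f v) + (∫ u in x..y, f u * ∫ v in u..y, f v)
      = (∫ v in x..y, f v)^2 := by
    rw [← intervalIntegral.integral_add hintA hintB]
    have : ∀ u ∈ Set.Icc x y,
        f u * (∫ v in x..u, f v) + f u * (∫ v in u..y, f v) = f u * ∫ v in x..y, f v := by
      intro u hu
      rw [← mul_add, hsplit u hu]
    rw [intervalIntegral.integral_congr (g := fun u => f u * ∫ v in x..y, f v)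
      (by rw [Set.uIcc_of_le hxy]; exact this),
      intervalIntegral.integral_mul_const, sq]
  have hA : (∫ u in x..y, f u * ∫ v in x..u, f v)
      = ∫ u in x..y, f u * ∫ v in u..y, f v := by
    rw [← hL, ← hR, hswap]
  linarith [hAB, hA]


lemma cint_master
    (ρ : ℝ) (hρ0 : 0 < ρ) (hρ1 : ρ < 1)
    (f : ℝ → ℝ) (hfm : Measurable f)
    (hfnn : ∀ u ∈ Set.Icc (0:ℝ) 1, 0 ≤ f u)
    (M : ℝ) (hfM : ∀ u ∈ Set.Icc (0:ℝ) 1, f u ≤ M)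
    (hf1 : (∫ u in (0:ℝ)..1, f u) = 1)
    (d : ℝ → ℝ → ℝ) (hdm : Measurable (Function.uncurry d))
    (S : ℝ) (hS : ∀ x ∈ Set.Icc (0:ℝ) 1, ∀ y ∈ Set.Icc (0:ℝ) 1, |d x y| ≤ S)
    (heq : ∀ x ∈ Set.Icc (0:ℝ) 1, ∀ y ∈ Set.Icc (0:ℝ) 1,
      d x y = ρ * f y * cint x y (fun u => d x u + d y u)) :
    ∀ x ∈ Set.Icc (0:ℝ) 1, ∀ y ∈ Set.Icc (0:ℝ) 1, d x y = 0 := by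
  set I : Set ℝ := Set.Icc (0:ℝ) 1 with hI
  have h0I : (0:ℝ) ∈ I := Set.left_mem_Icc.2 zero_le_one
  have h1I : (1:ℝ) ∈ I := Set.right_mem_Icc.2 zero_le_one
  set F : ℝ → ℝ := fun t => ∫ u in (0:ℝ)..t, f u with hFdef
  have hfabs : ∀ u ∈ I, |f u| ≤ M := fun u hu => by
    rw [abs_of_nonneg (hfnn u hu)]; exact hfM u hu
  have hint : ∀ a ∈ I, ∀ b ∈ I, IntervalIntegrable f MeasureTheory.volume a b :=
    fun a ha b hb => aux_intInt hfm hfabs ha hb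
  have hS0 : 0 ≤ S := (abs_nonneg _).trans (hS 0 h0I 0 h0I)
  have hdmx : ∀ x : ℝ, Measurable (fun u => d x u) :=
    fun x => hdm.comp measurable_prodMk_left
  have hdint : ∀ x ∈ I, ∀ a ∈ I, ∀ b ∈ I,
      IntervalIntegrable (fun u => d x u) MeasureTheory.volume a b :=
    fun x hx a ha b hb => aux_intInt (hdmx x) (fun u hu => hS x hx u hu) ha hb
  have hFsub : ∀ a ∈ I, ∀ b ∈ I, (∫ u in a..b, f u) = F b - F a := by
    intro a ha b hb
    have h := intervalIntegral.integral_add_adjacent_intervals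
      (hint 0 h0I a ha) (hint a ha b hb)
    simp only [hFdef]; linarith
  have hF0 : F 0 = 0 := intervalIntegral.integral_same
  have hF1 : F 1 = 1 := hf1
  have hFmono : ∀ a ∈ I, ∀ b ∈ I, a ≤ b → F a ≤ F b := by
    intro a ha b hb hab
    have h := intervalIntegral.integral_nonneg (μ := MeasureTheory.volume) hab
      (fun u hu => hfnn u ⟨ha.1.trans hu.1, hu.2.trans hb.2⟩)
    have h2 := hFsub a ha b hb; linarith
  have hFnn : ∀ a ∈ I, 0 ≤ F a := fun a ha => hF0 ▸ hFmono 0 h0I a ha ha.1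
  have hFle1 : ∀ a ∈ I, F a ≤ 1 := fun a ha => hF1 ▸ hFmono a ha 1 h1I ha.2
  have hJle : ∀ a ∈ I, ∀ b ∈ I, a ≤ b → cint a b f = F b - F a := by
    intro a ha b hb hab; rw [cint, if_pos hab]; exact hFsub a ha b hb
  have hJgt : ∀ a ∈ I, ∀ b ∈ I, b < a → cint a b f = 1 - F a + F b := by
    intro a ha b hb hba
    rw [cint, if_neg (not_le.2 hba), hFsub a ha 1 h1I]
    have : (∫ u in (0:ℝ)..b, f u) = F b := rfl
    rw [this, hF1]
  have hJub : ∀ a ∈ I, ∀ b ∈ I, b ≤ a → cint a b f ≤ 1 - F a + F b := by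
    intro a ha b hb hba
    rcases lt_or_eq_of_le hba with h | h
    · exact (hJgt a ha b hb h).le
    · subst h
      rw [cint, if_pos le_rfl, intervalIntegral.integral_same]
      linarith [hFle1 b hb]
  have hJnn : ∀ a ∈ I, ∀ b ∈ I, 0 ≤ cint a b f := by
    intro a ha b hb
    rw [cint]; split
    · exact intervalIntegral.integral_nonneg (μ := MeasureTheory.volume) ‹_›
        (fun u hu => hfnn u ⟨ha.1.trans hu.1, hu.2.trans hb.2⟩)
    · have h1 := intervalIntegral.integral_nonneg (μ := MeasureTheory.volume) ha.2
        (fun u hu => hfnn u ⟨ha.1.trans hu.1, hu.2⟩)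
      have h2 := intervalIntegral.integral_nonneg (μ := MeasureTheory.volume) hb.1
        (fun u hu => hfnn u ⟨hu.1, hu.2.trans hb.2⟩)
      linarith
  have hJle1 : ∀ a ∈ I, ∀ b ∈ I, cint a b f ≤ 1 := by
    intro a ha b hb
    rcases le_or_gt a b with h | h
    · rw [hJle a ha b hb h]
      linarith [hFnn a ha, hFle1 b hb]
    · rw [hJgt a ha b hb h]
      linarith [hFmono b hb a ha h.le]
  have hFcont : ContinuousOn F I := by
    have h01 := hint 0 h0I 1 h1I
    have := intervalIntegral.continuousOn_primitive_interval' h01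
      (Set.left_mem_uIcc (a := (0:ℝ)) (b := 1))
    simpa [Set.uIcc_of_le (zero_le_one (α := ℝ))] using this
  have hfFint : ∀ a ∈ I, ∀ b ∈ I,
      IntervalIntegrable (fun u => f u * F u) MeasureTheory.volume a b := by
    intro a ha b hb
    exact (hint a ha b hb).mul_continuousOn (hFcont.mono (Set.uIcc_subset_Icc ha hb))
  have hPF : ∀ x ∈ I, ∀ y ∈ I, x ≤ y →
      (∫ u in x..y, f u * F u) = (F y^2 - F x^2)/2 := by
    intro x hx y hy hxy
    have hprim : ContinuousOn (fun u => ∫ v in x..u, f v) (Set.uIcc x y) :=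
      intervalIntegral.continuousOn_primitive_interval'
        (aux_intInt hfm hfabs hx hy) Set.left_mem_uIcc
    have hA : IntervalIntegrable (fun u => f u * ∫ v in x..u, f v)
        MeasureTheory.volume x y := (hint x hx y hy).mul_continuousOn hprim
    have hB : IntervalIntegrable (fun u => F x * f u) MeasureTheory.volume x y :=
      (hint x hx y hy).const_mul (F x)
    have he : Set.EqOn (fun u => f u * F u)
        (fun u => (f u * ∫ v in x..u, f v) + F x * f u) (Set.uIcc x y) := by
      intro u hu
      have huI : u ∈ I := Set.uIcc_subset_Icc hx hy hu
      have := hFsub x hx u huI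
      simp only
      rw [this]; ring
    rw [intervalIntegral.integral_congr he, intervalIntegral.integral_add hA hB,
      aux_fubini hfm hfabs hx.1 hxy hy.2, intervalIntegral.integral_const_mul,
      hFsub x hx y hy]
    ring
  -- base bound: |d x y| ≤ 2 ρ S f y
  have base : ∀ x ∈ I, ∀ y ∈ I, |d x y| ≤ (2*ρ*S) * f y := by
    intro x hx y hy
    have hρf : 0 ≤ ρ * f y := mul_nonneg hρ0.le (hfnn y hy)
    rw [heq x hx y hy, abs_mul, abs_of_nonneg hρf]
    have hbd : ∀ u ∈ I, |d x u + d y u| ≤ 2*S := by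
      intro u hu
      calc |d x u + d y u| ≤ |d x u| + |d y u| := abs_add_le _ _
        _ ≤ 2*S := by linarith [hS x hx u hu, hS y hy u hu]
    have hkey : |cint x y (fun u => d x u + d y u)| ≤ 2*S := by
      have knorm : ∀ a ∈ I, ∀ b ∈ I, a ≤ b →
          |∫ u in a..b, (d x u + d y u)| ≤ 2*S*(b-a) := by
        intro a ha b hb hab
        have h := intervalIntegral.norm_integral_le_of_norm_le_const
          (C := 2*S) (f := fun u => d x u + d y u) (a := a) (b := b) ?_
        · rwa [Real.norm_eq_abs, abs_of_nonneg (by linarith : (0:ℝ) ≤ b - a)] at h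
        · intro u hu
          have huI : u ∈ I := Set.uIcc_subset_Icc ha hb (Set.uIoc_subset_uIcc hu)
          exact hbd u huI
      rw [cint]; split
      · have := knorm x hx y hy ‹_›
        have hb1 : y - x ≤ 1 := by rcases hx with ⟨h1,h2⟩; rcases hy with ⟨h3,h4⟩; linarith
        nlinarith
      · have h1 := knorm x hx 1 h1I hx.2
        have h2 := knorm 0 h0I y hy hy.1
        have hyx : y < x := not_le.1 ‹_›
        calc |(∫ u in x..(1:ℝ), (d x u + d y u)) + ∫ u in (0:ℝ)..y, (d x u + d y u)|
            ≤ |∫ u in x..(1:ℝ), (d x u + d y u)| + |∫ u in (0:ℝ)..y, (d x u + d y u)| :=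
              abs_add_le _ _
          _ ≤ 2*S*(1-x) + 2*S*(y-0) := add_le_add h1 h2
          _ ≤ 2*S := by nlinarith
    calc ρ * f y * |cint x y (fun u => d x u + d y u)|
        ≤ ρ * f y * (2*S) := mul_le_mul_of_nonneg_left hkey hρf
      _ = (2*ρ*S) * f y := by ring
  -- initial Q bound
  have hQ0 : ∀ x ∈ I, ∀ y ∈ I, |d x y| ≤ (4*ρ^2*S) * f y * cint x y f := by
    intro x hx y hy
    have hρf : 0 ≤ ρ * f y := mul_nonneg hρ0.le (hfnn y hy)
    rw [heq x hx y hy, abs_mul, abs_of_nonneg hρf]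
    have hbd : ∀ u ∈ I, |d x u + d y u| ≤ (4*ρ*S) * f u := by
      intro u hu
      have h1 := base x hx u hu
      have h2 := base y hy u hu
      calc |d x u + d y u| ≤ |d x u| + |d y u| := abs_add_le _ _
        _ ≤ (4*ρ*S) * f u := by linarith
    have hkey : |cint x y (fun u => d x u + d y u)| ≤ (4*ρ*S) * cint x y f := by
      rw [← cint_const_mul x y (4*ρ*S) f]
      refine cint_abs_le hx hy
        (fun a ha b hb => ((hdint x hx a ha b hb).add (hdint y hy a ha b hb)))
        (fun a ha b hb => (hint a ha b hb).const_mul _) hbd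
    calc ρ * f y * |cint x y (fun u => d x u + d y u)|
        ≤ ρ * f y * ((4*ρ*S) * cint x y f) := mul_le_mul_of_nonneg_left hkey hρf
      _ = (4*ρ^2*S) * f y * cint x y f := by ring
  -- contraction step
  have step : ∀ c : ℝ, 0 ≤ c →
      (∀ x ∈ I, ∀ y ∈ I, |d x y| ≤ c * f y * cint x y f) →
      ∀ x ∈ I, ∀ y ∈ I, |d x y| ≤ ρ * c * f y * cint x y f := by
    intro c hc hQ x hx y hy
    have hρf : 0 ≤ ρ * f y := mul_nonneg hρ0.le (hfnn y hy)
    rw [heq x hx y hy, abs_mul, abs_of_nonneg hρf]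
    have hsum_int : ∀ a ∈ I, ∀ b ∈ I, IntervalIntegrable
        (fun u => d x u + d y u) MeasureTheory.volume a b :=
      fun a ha b hb => (hdint x hx a ha b hb).add (hdint y hy a ha b hb)
    rcases le_or_gt x y with hxy | hyx
    · -- case x ≤ y
      set B : ℝ → ℝ := fun u => (2*c) * (f u * F u) + (c * (1 - F x - F y)) * f u with hBdef
      have hBint : IntervalIntegrable B MeasureTheory.volume x y :=
        ((hfFint x hx y hy).const_mul _).add ((hint x hx y hy).const_mul _)
      have hBbd : ∀ u ∈ Set.Icc x y, |d x u + d y u| ≤ B u := by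
        intro u hu
        have huI : u ∈ I := ⟨hx.1.trans hu.1, hu.2.trans hy.2⟩
        have hcf : 0 ≤ c * f u := mul_nonneg hc (hfnn u huI)
        have h1 : |d x u| ≤ c * f u * (F u - F x) := by
          have h := hQ x hx u huI
          rwa [hJle x hx u huI hu.1] at h
        have h2 : |d y u| ≤ c * f u * (1 - F y + F u) := by
          have h := hQ y hy u huI
          have hub := hJub y hy u huI hu.2
          exact h.trans (mul_le_mul_of_nonneg_left hub hcf)
        have hBu : B u = c * f u * (F u - F x) + c * f u * (1 - F y + F u) := by
          simp only [hBdef]; ring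
        calc |d x u + d y u| ≤ |d x u| + |d y u| := abs_add_le _ _
          _ ≤ B u := by rw [hBu]; linarith
      have hBcalc : (∫ u in x..y, B u) = c * (F y - F x) := by
        simp only [hBdef]
        rw [intervalIntegral.integral_add ((hfFint x hx y hy).const_mul _)
          ((hint x hx y hy).const_mul _), intervalIntegral.integral_const_mul,
          intervalIntegral.integral_const_mul, hPF x hx y hy hxy, hFsub x hx y hy]
        ring
      have hkey : |cint x y (fun u => d x u + d y u)| ≤ c * (F y - F x) := by
        rw [cint, if_pos hxy]
        calc |∫ u in x..y, (d x u + d y u)|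
            ≤ ∫ u in x..y, |d x u + d y u| :=
              intervalIntegral.abs_integral_le_integral_abs hxy
          _ ≤ ∫ u in x..y, B u :=
              intervalIntegral.integral_mono_on hxy (hsum_int x hx y hy).abs hBint hBbd
          _ = c * (F y - F x) := hBcalc
      calc ρ * f y * |cint x y (fun u => d x u + d y u)|
          ≤ ρ * f y * (c * (F y - F x)) := mul_le_mul_of_nonneg_left hkey hρf
        _ = ρ * c * f y * cint x y f := by rw [hJle x hx y hy hxy]; ring
    · -- case y < x
      set B₁ : ℝ → ℝ := fun u => (2*c) * (f u * F u) + (c * (- F x - F y)) * f u with hB₁def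
      set B₂ : ℝ → ℝ := fun u => (2*c) * (f u * F u) + (c * (2 - F x - F y)) * f u with hB₂def
      have hB₁int : IntervalIntegrable B₁ MeasureTheory.volume x 1 :=
        ((hfFint x hx 1 h1I).const_mul _).add ((hint x hx 1 h1I).const_mul _)
      have hB₂int : IntervalIntegrable B₂ MeasureTheory.volume 0 y :=
        ((hfFint 0 h0I y hy).const_mul _).add ((hint 0 h0I y hy).const_mul _)
      have hB₁bd : ∀ u ∈ Set.Icc x (1:ℝ), |d x u + d y u| ≤ B₁ u := by
        intro u hu
        have huI : u ∈ I := ⟨hx.1.trans hu.1, hu.2⟩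
        have h1 : |d x u| ≤ c * f u * (F u - F x) := by
          have h := hQ x hx u huI
          rwa [hJle x hx u huI hu.1] at h
        have h2 : |d y u| ≤ c * f u * (F u - F y) := by
          have h := hQ y hy u huI
          rwa [hJle y hy u huI (hyx.le.trans hu.1)] at h
        have hBu : B₁ u = c * f u * (F u - F x) + c * f u * (F u - F y) := by
          simp only [hB₁def]; ring
        calc |d x u + d y u| ≤ |d x u| + |d y u| := abs_add_le _ _
          _ ≤ B₁ u := by rw [hBu]; linarith
      have hB₂bd : ∀ u ∈ Set.Icc (0:ℝ) y, |d x u + d y u| ≤ B₂ u := by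
        intro u hu
        have huI : u ∈ I := ⟨hu.1, hu.2.trans hy.2⟩
        have hcf : 0 ≤ c * f u := mul_nonneg hc (hfnn u huI)
        have h1 : |d x u| ≤ c * f u * (1 - F x + F u) := by
          have h := hQ x hx u huI
          have hub := hJub x hx u huI (hu.2.trans hyx.le)
          exact h.trans (mul_le_mul_of_nonneg_left hub hcf)
        have h2 : |d y u| ≤ c * f u * (1 - F y + F u) := by
          have h := hQ y hy u huI
          have hub := hJub y hy u huI hu.2
          exact h.trans (mul_le_mul_of_nonneg_left hub hcf)
        have hBu : B₂ u = c * f u * (1 - F x + F u) + c * f u * (1 - F y + F u) := by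
          simp only [hB₂def]; ring
        calc |d x u + d y u| ≤ |d x u| + |d y u| := abs_add_le _ _
          _ ≤ B₂ u := by rw [hBu]; linarith
      have hB₁calc : (∫ u in x..(1:ℝ), B₁ u)
          = c * (1 - F x^2) + c * (- F x - F y) * (1 - F x) := by
        simp only [hB₁def]
        rw [intervalIntegral.integral_add ((hfFint x hx 1 h1I).const_mul _)
          ((hint x hx 1 h1I).const_mul _), intervalIntegral.integral_const_mul,
          intervalIntegral.integral_const_mul, hPF x hx 1 h1I hx.2, hFsub x hx 1 h1I, hF1]
        ring
      have hB₂calc : (∫ u in (0:ℝ)..y, B₂ u)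
          = c * F y^2 + c * (2 - F x - F y) * F y := by
        simp only [hB₂def]
        rw [intervalIntegral.integral_add ((hfFint 0 h0I y hy).const_mul _)
          ((hint 0 h0I y hy).const_mul _), intervalIntegral.integral_const_mul,
          intervalIntegral.integral_const_mul, hPF 0 h0I y hy hy.1, hFsub 0 h0I y hy, hF0]
        ring
      have hkey : |cint x y (fun u => d x u + d y u)| ≤ c * (1 - F x + F y) := by
        rw [cint, if_neg (not_le.2 hyx)]
        calc |(∫ u in x..(1:ℝ), (d x u + d y u)) + ∫ u in (0:ℝ)..y, (d x u + d y u)|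
            ≤ |∫ u in x..(1:ℝ), (d x u + d y u)| + |∫ u in (0:ℝ)..y, (d x u + d y u)| :=
              abs_add_le _ _
          _ ≤ (∫ u in x..(1:ℝ), B₁ u) + ∫ u in (0:ℝ)..y, B₂ u := by
              refine add_le_add ?_ ?_
              · calc |∫ u in x..(1:ℝ), (d x u + d y u)|
                    ≤ ∫ u in x..(1:ℝ), |d x u + d y u| :=
                      intervalIntegral.abs_integral_le_integral_abs hx.2
                  _ ≤ ∫ u in x..(1:ℝ), B₁ u :=
                      intervalIntegral.integral_mono_on hx.2
                        (hsum_int x hx 1 h1I).abs hB₁int hB₁bd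
              · calc |∫ u in (0:ℝ)..y, (d x u + d y u)|
                    ≤ ∫ u in (0:ℝ)..y, |d x u + d y u| :=
                      intervalIntegral.abs_integral_le_integral_abs hy.1
                  _ ≤ ∫ u in (0:ℝ)..y, B₂ u :=
                      intervalIntegral.integral_mono_on hy.1
                        (hsum_int 0 h0I y hy).abs hB₂int hB₂bd
          _ = c * (1 - F x + F y) := by rw [hB₁calc, hB₂calc]; ring
      calc ρ * f y * |cint x y (fun u => d x u + d y u)|
          ≤ ρ * f y * (c * (1 - F x + F y)) := mul_le_mul_of_nonneg_left hkey hρf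
        _ = ρ * c * f y * cint x y f := by rw [hJgt x hx y hy hyx]; ring
  -- iterate
  have hQn : ∀ n : ℕ, ∀ x ∈ I, ∀ y ∈ I,
      |d x y| ≤ ρ^n * (4*ρ^2*S) * f y * cint x y f := by
    intro n
    induction n with
    | zero => simpa using hQ0
    | succ n ih =>
      have hc : 0 ≤ ρ^n * (4*ρ^2*S) := by positivity
      have h := step (ρ^n * (4*ρ^2*S)) hc ih
      intro x hx y hy
      calc |d x y| ≤ ρ * (ρ^n * (4*ρ^2*S)) * f y * cint x y f := h x hx y hy
        _ = ρ^(n+1) * (4*ρ^2*S) * f y * cint x y f := by ring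
  -- conclude
  intro x hx y hy
  have hfin : ∀ n : ℕ, |d x y| ≤ ρ^n * (4*ρ^2*S*M) := by
    intro n
    have h := hQn n x hx y hy
    have hc : 0 ≤ ρ^n * (4*ρ^2*S) := by positivity
    have hfyJ : f y * cint x y f ≤ M := by
      have h1 : f y * cint x y f ≤ f y * 1 :=
        mul_le_mul_of_nonneg_left (hJle1 x hx y hy) (hfnn y hy)
      have h2 := hfM y hy
      linarith
    calc |d x y| ≤ ρ^n * (4*ρ^2*S) * f y * cint x y f := h
      _ = ρ^n * (4*ρ^2*S) * (f y * cint x y f) := by ring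
      _ ≤ ρ^n * (4*ρ^2*S) * M := mul_le_mul_of_nonneg_left hfyJ hc
      _ = ρ^n * (4*ρ^2*S*M) := by ring
  have hlim : Filter.Tendsto (fun n : ℕ => ρ^n * (4*ρ^2*S*M)) Filter.atTop (nhds 0) := by
    have := (tendsto_pow_atTop_nhds_zero_of_lt_one hρ0.le hρ1).mul_const (4*ρ^2*S*M)
    simpa using this
  have : |d x y| ≤ 0 := ge_of_tendsto' hlim hfin
  exact abs_eq_zero.1 (le_antisymm this (abs_nonneg _))


/-- Uniqueness of bounded measurable solutions of the circular integral equation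
`g(x,y) = ρ·π(y)·∫*_{u=x}^{y} [g(x,u) + g(y,u)] du + a(x,y)`. -/
theorem unique_bounded_solution_circular_integral_equation
    (ρ : ℝ) (hρ : ρ ∈ Set.Ioo (0 : ℝ) 1)
    (π : ℝ → ℝ) (hπmeas : Measurable π)
    (hπnn : ∀ x ∈ Set.Icc (0 : ℝ) 1, 0 ≤ π x)
    (hπbd : ∃ M : ℝ, ∀ x ∈ Set.Icc (0 : ℝ) 1, π x ≤ M)
    (hπint : (∫ u in (0 : ℝ)..1, π u) = 1)
    (a : ℝ → ℝ → ℝ)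
    (g₀ g₁ : ℝ → ℝ → ℝ)
    (hg₀meas : Measurable (Function.uncurry g₀))
    (hg₁meas : Measurable (Function.uncurry g₁))
    (hg₀bd : ∃ M : ℝ, ∀ x ∈ Set.Icc (0 : ℝ) 1, ∀ y ∈ Set.Icc (0 : ℝ) 1, |g₀ x y| ≤ M)
    (hg₁bd : ∃ M : ℝ, ∀ x ∈ Set.Icc (0 : ℝ) 1, ∀ y ∈ Set.Icc (0 : ℝ) 1, |g₁ x y| ≤ M)
    (heq₀ : ∀ x ∈ Set.Icc (0 : ℝ) 1, ∀ y ∈ Set.Icc (0 : ℝ) 1,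
      g₀ x y = ρ * π y * cint x y (fun u => g₀ x u + g₀ y u) + a x y)
    (heq₁ : ∀ x ∈ Set.Icc (0 : ℝ) 1, ∀ y ∈ Set.Icc (0 : ℝ) 1,
      g₁ x y = ρ * π y * cint x y (fun u => g₁ x u + g₁ y u) + a x y) :
    ∀ x ∈ Set.Icc (0 : ℝ) 1, ∀ y ∈ Set.Icc (0 : ℝ) 1, g₀ x y = g₁ x y := by
  obtain ⟨hρ0, hρ1⟩ := hρ
  obtain ⟨M₀, hM₀⟩ := hg₀bd
  obtain ⟨M₁, hM₁⟩ := hg₁bd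
  obtain ⟨Mπ, hMπ⟩ := hπbd
  set d : ℝ → ℝ → ℝ := fun x y => g₀ x y - g₁ x y with hd
  have hdm : Measurable (Function.uncurry d) := hg₀meas.sub hg₁meas
  have hS : ∀ x ∈ Set.Icc (0:ℝ) 1, ∀ y ∈ Set.Icc (0:ℝ) 1, |d x y| ≤ M₀ + M₁ := by
    intro x hx y hy
    calc |d x y| = |g₀ x y - g₁ x y| := rfl
      _ ≤ |g₀ x y| + |g₁ x y| := abs_sub _ _
      _ ≤ M₀ + M₁ := add_le_add (hM₀ x hx y hy) (hM₁ x hx y hy)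
  have key : ∀ x ∈ Set.Icc (0:ℝ) 1, ∀ y ∈ Set.Icc (0:ℝ) 1,
      d x y = ρ * π y * cint x y (fun u => d x u + d y u) := by
    intro x hx y hy
    have m0 : Measurable fun u => g₀ x u + g₀ y u :=
      (hg₀meas.comp measurable_prodMk_left).add (hg₀meas.comp measurable_prodMk_left)
    have m1 : Measurable fun u => g₁ x u + g₁ y u :=
      (hg₁meas.comp measurable_prodMk_left).add (hg₁meas.comp measurable_prodMk_left)
    have b0 : ∀ u ∈ Set.Icc (0:ℝ) 1, |g₀ x u + g₀ y u| ≤ M₀ + M₀ := fun u hu =>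
      (abs_add_le _ _).trans (add_le_add (hM₀ x hx u hu) (hM₀ y hy u hu))
    have b1 : ∀ u ∈ Set.Icc (0:ℝ) 1, |g₁ x u + g₁ y u| ≤ M₁ + M₁ := fun u hu =>
      (abs_add_le _ _).trans (add_le_add (hM₁ x hx u hu) (hM₁ y hy u hu))
    have i0 : ∀ a' ∈ Set.Icc (0:ℝ) 1, ∀ b' ∈ Set.Icc (0:ℝ) 1,
        IntervalIntegrable (fun u => g₀ x u + g₀ y u) MeasureTheory.volume a' b' :=
      fun a' ha b' hb => aux_intInt m0 b0 ha hb
    have i1 : ∀ a' ∈ Set.Icc (0:ℝ) 1, ∀ b' ∈ Set.Icc (0:ℝ) 1,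
        IntervalIntegrable (fun u => g₁ x u + g₁ y u) MeasureTheory.volume a' b' :=
      fun a' ha b' hb => aux_intInt m1 b1 ha hb
    have hsub := cint_sub hx hy i0 i1
    have hfe : (fun u => (g₀ x u + g₀ y u) - (g₁ x u + g₁ y u))
        = fun u => d x u + d y u := by
      funext u; simp only [hd]; ring
    calc d x y = g₀ x y - g₁ x y := rfl
      _ = ρ * π y * (cint x y (fun u => g₀ x u + g₀ y u)
            - cint x y (fun u => g₁ x u + g₁ y u)) := by
          rw [heq₀ x hx y hy, heq₁ x hx y hy]; ring
      _ = ρ * π y * cint x y (fun u => d x u + d y u) := by rw [← hsub, hfe]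
  have hz := cint_master ρ hρ0 hρ1 π hπmeas hπnn Mπ hMπ hπint d hdm (M₀+M₁) hS key
  intro x hx y hy
  have h := hz x hx y hy
  have : g₀ x y - g₁ x y = 0 := h
  linarith
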